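/- Let E ⊂ R and suppose for some k ≥ 1 that |[2^k, 2^{k+1}] ∩ (R \ E)| ≥ 2^{k−1}. Then ∫_{2^k}^{2^{k+1}} θ_E(t)²/t³ dt > 10^{−3}, where θ_E(t) = |(R\E) ∩ [−t,t]|. -/

import Mathlib

open MeasureTheory

theorem integral_theta_sq_gt (E : Set ℝ) (k : ℕ) (hk : 1 ≤ k)
    (h : ENNReal.ofReal ((2:ℝ) ^ k / 2) ≤
      volume (Set.Icc ((2:ℝ) ^ k) ((2:ℝ) ^ (k + 1)) ∩ Eᶜ)) :
    (1 : ℝ) / 1000 <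
      ∫ t in ((2:ℝ) ^ k)..((2:ℝ) ^ (k + 1)),
        ((volume (Eᶜ ∩ Set.Icc (-t) t)).toReal) ^ 2 / t ^ 3 := by
  set c : ℝ := (2:ℝ) ^ k with hcdef
  have hc2 : (2:ℝ) ≤ c := by
    rw [hcdef]
    calc (2:ℝ) = 2 ^ 1 := (pow_one 2).symm
    _ ≤ 2 ^ k := pow_le_pow_right₀ (by norm_num) hk
  have hc0 : (0:ℝ) < c := by linarith
  have hb : (2:ℝ) ^ (k + 1) = 2 * c := by rw [hcdef, pow_succ]; ring
  rw [hb] at h ⊢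
  set a : ℝ := 3 * c / 2 with hadef
  have ha0 : (0:ℝ) < a := by rw [hadef]; linarith
  set θ : ℝ → ℝ := fun t => (volume (Eᶜ ∩ Set.Icc (-t) t)).toReal with hθdef
  have hθmono : Monotone θ := by
    intro s t hst
    apply ENNReal.toReal_mono
    · exact (lt_of_le_of_lt (measure_mono Set.inter_subset_right) measure_Icc_lt_top).ne
    · exact measure_mono (Set.inter_subset_inter_right _
        (Set.Icc_subset_Icc (by linarith) hst))
  have hθnonneg : ∀ t, 0 ≤ θ t := fun t => ENNReal.toReal_nonneg
  -- key pointwise bound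
  have key : ∀ t ∈ Set.Icc a (2 * c), t - a ≤ θ t := by
    intro t ht
    obtain ⟨hta, ht2c⟩ := ht
    set S : Set ℝ := Set.Icc c (2 * c) ∩ Eᶜ with hSdef
    have hsub : S ∩ Set.Icc c t ⊆ Eᶜ ∩ Set.Icc (-t) t := by
      rintro x ⟨⟨hx1, hx2⟩, hx3⟩
      exact ⟨hx2, ⟨by linarith [hx3.1], hx3.2⟩⟩
    have hcover : S ⊆ (S ∩ Set.Icc c t) ∪ Set.Ioc t (2 * c) := by
      rintro x ⟨hx1, hx2⟩
      by_cases hxt : x ≤ t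
      · exact Or.inl ⟨⟨hx1, hx2⟩, ⟨hx1.1, hxt⟩⟩
      · exact Or.inr ⟨lt_of_not_ge hxt, hx1.2⟩
    have hmeas1 : volume S ≤ volume (S ∩ Set.Icc c t) + ENNReal.ofReal (2 * c - t) := by
      calc volume S ≤ volume ((S ∩ Set.Icc c t) ∪ Set.Ioc t (2 * c)) := measure_mono hcover
      _ ≤ volume (S ∩ Set.Icc c t) + volume (Set.Ioc t (2 * c)) := measure_union_le _ _
      _ = volume (S ∩ Set.Icc c t) + ENNReal.ofReal (2 * c - t) := by rw [Real.volume_Ioc]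
    have h1 : ENNReal.ofReal (t - a) + ENNReal.ofReal (2 * c - t) ≤
        volume (S ∩ Set.Icc c t) + ENNReal.ofReal (2 * c - t) := by
      rw [← ENNReal.ofReal_add (by linarith) (by linarith)]
      have e : t - a + (2 * c - t) = c / 2 := by rw [hadef]; ring
      rw [e]
      exact le_trans h hmeas1
    have h2 : ENNReal.ofReal (t - a) ≤ volume (S ∩ Set.Icc c t) :=
      (ENNReal.add_le_add_iff_right ENNReal.ofReal_ne_top).mp h1
    have h3 : ENNReal.ofReal (t - a) ≤ volume (Eᶜ ∩ Set.Icc (-t) t) :=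
      le_trans h2 (measure_mono hsub)
    have hfin : volume (Eᶜ ∩ Set.Icc (-t) t) ≠ ⊤ :=
      (lt_of_le_of_lt (measure_mono Set.inter_subset_right) measure_Icc_lt_top).ne
    have h4 := ENNReal.toReal_mono hfin h3
    rwa [ENNReal.toReal_ofReal (by linarith)] at h4
  -- the integrand
  show (1:ℝ) / 1000 < ∫ t in c..(2 * c), θ t ^ 2 / t ^ 3
  set f : ℝ → ℝ := fun t => θ t ^ 2 / t ^ 3 with hfdef
  have hfmeas : Measurable f :=
    (hθmono.measurable.pow_const 2).div (measurable_id.pow_const 3)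
  have hfnonneg : ∀ t, c ≤ t → 0 ≤ f t := by
    intro t ht
    exact div_nonneg (sq_nonneg _) (pow_nonneg (by linarith) 3)
  have hfint : IntervalIntegrable f volume c (2 * c) := by
    rw [intervalIntegrable_iff_integrableOn_Ioc_of_le (by linarith)]
    apply Measure.integrableOn_of_bounded (M := (4 * c) ^ 2 / c ^ 3)
      measure_Ioc_lt_top.ne hfmeas.aestronglyMeasurable
    filter_upwards [ae_restrict_mem measurableSet_Ioc] with t ht
    have htc : c < t := ht.1
    have ht2 : t ≤ 2 * c := ht.2
    have hθt : θ t ≤ 4 * c := by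
      have hmono2 : volume (Eᶜ ∩ Set.Icc (-t) t) ≤ volume (Set.Icc (-(2 * c)) (2 * c)) :=
        measure_mono (Set.inter_subset_right.trans
          (Set.Icc_subset_Icc (by linarith) (by linarith)))
      calc θ t ≤ (volume (Set.Icc (-(2 * c)) (2 * c))).toReal :=
            ENNReal.toReal_mono measure_Icc_lt_top.ne hmono2
        _ = 4 * c := by
            rw [Real.volume_Icc, ENNReal.toReal_ofReal (by linarith)]; ring
    rw [Real.norm_eq_abs, abs_of_nonneg (hfnonneg t htc.le)]
    apply div_le_div₀ (by positivity) (pow_le_pow_left₀ (hθnonneg t) hθt 2) (by positivity)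
      (pow_le_pow_left₀ (by linarith) htc.le 3)
  have hint1 : IntervalIntegrable f volume c a :=
    hfint.mono_set (by
      rw [Set.uIcc_of_le (by linarith), Set.uIcc_of_le (by linarith)]
      exact Set.Icc_subset_Icc le_rfl (by linarith))
  have hint2 : IntervalIntegrable f volume a (2 * c) :=
    hfint.mono_set (by
      rw [Set.uIcc_of_le (by linarith), Set.uIcc_of_le (by linarith)]
      exact Set.Icc_subset_Icc (by linarith) le_rfl)
  have hgint : IntervalIntegrable (fun t => (t - a) ^ 2 / t ^ 3) volume a (2 * c) := by
    apply ContinuousOn.intervalIntegrable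
    apply ContinuousOn.div (by fun_prop) (by fun_prop)
    intro t ht
    rw [Set.uIcc_of_le (by linarith)] at ht
    have ht0 : (0:ℝ) < t := by linarith [ht.1]
    positivity
  have hmono : (∫ t in a..(2 * c), (t - a) ^ 2 / t ^ 3) ≤ ∫ t in a..(2 * c), f t := by
    apply intervalIntegral.integral_mono_on (by linarith) hgint hint2
    intro t ht
    have h1 := key t ht
    have ht0 : (0:ℝ) < t := by linarith [ht.1]
    have h2 : (t - a) ^ 2 ≤ θ t ^ 2 := pow_le_pow_left₀ (by linarith [ht.1]) h1 2
    exact (div_le_div_iff_of_pos_right (by positivity)).mpr h2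
  have hsplit : (∫ t in c..(2 * c), f t) = (∫ t in c..a, f t) + ∫ t in a..(2 * c), f t :=
    (intervalIntegral.integral_add_adjacent_intervals hint1 hint2).symm
  have hpos1 : 0 ≤ ∫ t in c..a, f t :=
    intervalIntegral.integral_nonneg (by linarith) (fun t ht => hfnonneg t ht.1)
  -- FTC
  set F : ℝ → ℝ := fun t => Real.log t + 2 * a * t⁻¹ - a ^ 2 / 2 * (t ^ 2)⁻¹ with hFdef
  have hftc : (∫ t in a..(2 * c), (t - a) ^ 2 / t ^ 3) = F (2 * c) - F a := by
    apply intervalIntegral.integral_eq_sub_of_hasDerivAt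
    · intro t ht
      rw [Set.uIcc_of_le (by linarith)] at ht
      have ht0 : (0:ℝ) < t := by linarith [ht.1]
      have ht0' : t ≠ 0 := ne_of_gt ht0
      have H1 : HasDerivAt Real.log t⁻¹ t := Real.hasDerivAt_log ht0'
      have H2 := (hasDerivAt_inv ht0').const_mul (2 * a)
      have H3 := ((hasDerivAt_pow 2 t).inv (pow_ne_zero 2 ht0')).const_mul (a ^ 2 / 2)
      have H := (H1.add H2).sub H3
      convert H using 1
      · funext y
        simp only [hFdef, Pi.add_apply, Pi.sub_apply, Pi.inv_apply]
      · norm_num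
        field_simp
        ring
    · exact hgint
  have hval : F (2 * c) - F a = Real.log (4 / 3) - 9 / 32 := by
    have hlog : Real.log (2 * c) - Real.log a = Real.log (4 / 3) := by
      rw [← Real.log_div (by linarith) (by linarith)]
      congr 1
      rw [hadef]
      field_simp
      ring
    have expand : F (2 * c) - F a = (Real.log (2 * c) - Real.log a) - 9 / 32 := by
      rw [hFdef]
      simp only
      rw [hadef]
      have hc0' : c ≠ 0 := ne_of_gt hc0
      field_simp
      ring
    rw [expand, hlog]
  have hlog43 : (0.2841 : ℝ) < Real.log (4 / 3) := by
    have h1 : (2:ℝ) ^ (41:ℕ) ≤ (4 / 3 : ℝ) ^ (100:ℕ) := by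
      rw [div_pow, le_div_iff₀ (by positivity)]
      norm_num
    have h2 := Real.log_le_log (by positivity) h1
    rw [Real.log_pow, Real.log_pow] at h2
    have hl2 := Real.log_two_gt_d9
    push_cast at h2
    nlinarith [hl2]
  linarith [hmono, hpos1, hsplit, hftc, hval, hlog43]
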